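/- The generating function of the numbers R_{t,i} (coefficient of X^0 in (X^{-1}+t+X)^i) satisfies (∑_i R_{t,i} X^i)^2 = 1/(1 − 2tX + (t²−4)X²) as formal power series. -/

import Mathlib

open Polynomial PowerSeries

/-- `R t i` is the central coefficient of `(1 + t X + X²)^i`, equivalently the
constant coefficient of `(X⁻¹ + t + X)^i`. -/
noncomputable def R (t : ℤ) (i : ℕ) : ℤ :=
  (((1 + Polynomial.C t * Polynomial.X + Polynomial.X ^ 2 : Polynomial ℤ)) ^ i).coeff i

theorem R_rec (t : ℤ) (n : ℕ) :
    ((n : ℤ) + 2) * R t (n + 2)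
      = (2 * n + 3) * t * R t (n + 1) - ((n : ℤ) + 1) * (t ^ 2 - 4) * R t n := by
  set p : Polynomial ℤ := 1 + Polynomial.C t * Polynomial.X + Polynomial.X ^ 2 with hp
  have hd : derivative p = Polynomial.C t + 2 * Polynomial.X := by
    simp [hp]
  have hdpow : derivative (p ^ (n + 1)) =
      Polynomial.C ((n : ℤ) + 1) * p ^ n * (Polynomial.C t + 2 * Polynomial.X) := by
    rw [Polynomial.derivative_pow, hd]
    simp only [Nat.add_sub_cancel, Nat.cast_add, Nat.cast_one, C_add, C_1]
  have c2 : (Polynomial.C (2 : ℤ)) = 2 := by norm_num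
  have key : Polynomial.C ((n : ℤ) + 2) * p ^ (n + 2)
        - Polynomial.C ((2 * (n : ℤ) + 3) * t) * (Polynomial.X * p ^ (n + 1))
        + Polynomial.C (((n : ℤ) + 1) * (t ^ 2 - 4)) * (Polynomial.X ^ 2 * p ^ n)
      = Polynomial.X * derivative ((Polynomial.X ^ 2 - 1) * p ^ (n + 1))
        - Polynomial.C ((n : ℤ) + 2) * ((Polynomial.X ^ 2 - 1) * p ^ (n + 1)) := by
    rw [derivative_mul, hdpow]
    simp only [derivative_sub, Polynomial.derivative_one, derivative_X_pow, hp,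
      C_add, C_mul, C_sub, C_pow, C_1, map_ofNat, Nat.cast_ofNat, c2]
    ring
  have hXmul : ∀ q : Polynomial ℤ, (Polynomial.X * q).coeff (n + 2) = q.coeff (n + 1) :=
    fun q => Polynomial.coeff_X_mul q (n + 1)
  have hX2mul : ∀ q : Polynomial ℤ, (Polynomial.X ^ 2 * q).coeff (n + 2) = q.coeff n :=
    fun q => Polynomial.coeff_X_pow_mul q 2 n
  have hder : ∀ q : Polynomial ℤ,
      (derivative q).coeff (n + 1) = q.coeff (n + 2) * ((n : ℤ) + 2) := by
    intro q
    have := Polynomial.coeff_derivative q (n + 1)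
    push_cast at this ⊢
    convert this using 2 <;> try ring
  have h2 := congrArg (fun q : Polynomial ℤ => q.coeff (n + 2)) key
  simp only [Polynomial.coeff_add, Polynomial.coeff_sub, Polynomial.coeff_C_mul,
    hXmul, hX2mul, hder, sub_mul, one_mul] at h2
  have hR : ∀ m : ℕ, (p ^ m).coeff m = R t m := fun m => rfl
  rw [hR, hR, hR] at h2
  linarith

theorem stmt13 (t : ℤ) :
    (PowerSeries.mk fun i => R t i) ^ 2 *
        (1 - PowerSeries.C (2 * t) * PowerSeries.X
           + PowerSeries.C (t ^ 2 - 4) * PowerSeries.X ^ 2)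
      = 1 := by
  set f : ℤ⟦X⟧ := PowerSeries.mk fun i => R t i with hf
  set q : ℤ⟦X⟧ := 1 - PowerSeries.C (2 * t) * PowerSeries.X
           + PowerSeries.C (t ^ 2 - 4) * PowerSeries.X ^ 2 with hq
  have R0 : R t 0 = 1 := by simp [R]
  have R1 : R t 1 = t := by simp [R, Polynomial.coeff_one]
  -- derivative of q
  have hq' : (d⁄dX ℤ) q
      = - PowerSeries.C (2 * t) + PowerSeries.C (2 * (t ^ 2 - 4)) * PowerSeries.X := by
    have h2 : (d⁄dX ℤ) ((2 : ℤ⟦X⟧)) = 0 := by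
      simpa using Derivation.map_natCast (d⁄dX ℤ) 2
    have h4 : (d⁄dX ℤ) ((4 : ℤ⟦X⟧)) = 0 := by
      simpa using Derivation.map_natCast (d⁄dX ℤ) 4
    simp [hq, pow_two, Derivation.leibniz, smul_eq_mul, h2, h4]
    try ring
  -- coefficient helpers
  have hc1 : ∀ (g : ℤ⟦X⟧) (c : ℤ) (m : ℕ),
      PowerSeries.coeff (m + 1) (g * (PowerSeries.C c * PowerSeries.X))
        = c * PowerSeries.coeff m g := by
    intro g c m
    rw [show g * (PowerSeries.C c * PowerSeries.X)
        = (PowerSeries.C c * g) * PowerSeries.X by ring,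
      PowerSeries.coeff_succ_mul_X, PowerSeries.coeff_C_mul]
  have hc10 : ∀ (g : ℤ⟦X⟧) (c : ℤ),
      PowerSeries.coeff 0 (g * (PowerSeries.C c * PowerSeries.X)) = 0 := by
    intro g c
    rw [show g * (PowerSeries.C c * PowerSeries.X)
        = (PowerSeries.C c * g) * PowerSeries.X by ring,
      PowerSeries.coeff_zero_mul_X]
  have hsq : ∀ (g : ℤ⟦X⟧) (c : ℤ),
      g * (PowerSeries.C c * PowerSeries.X ^ 2)
        = ((PowerSeries.C c * g) * PowerSeries.X) * PowerSeries.X := by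
    intro g c; ring
  have hc2 : ∀ (g : ℤ⟦X⟧) (c : ℤ) (m : ℕ),
      PowerSeries.coeff (m + 2) (g * (PowerSeries.C c * PowerSeries.X ^ 2))
        = c * PowerSeries.coeff m g := by
    intro g c m
    rw [hsq, show m + 2 = (m + 1) + 1 from rfl, PowerSeries.coeff_succ_mul_X,
      PowerSeries.coeff_succ_mul_X, PowerSeries.coeff_C_mul]
  have hc20 : ∀ (g : ℤ⟦X⟧) (c : ℤ),
      PowerSeries.coeff 0 (g * (PowerSeries.C c * PowerSeries.X ^ 2)) = 0 := by
    intro g c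
    rw [hsq, PowerSeries.coeff_zero_mul_X]
  have hc21 : ∀ (g : ℤ⟦X⟧) (c : ℤ),
      PowerSeries.coeff 1 (g * (PowerSeries.C c * PowerSeries.X ^ 2)) = 0 := by
    intro g c
    rw [hsq, show (1 : ℕ) = 0 + 1 from rfl, PowerSeries.coeff_succ_mul_X,
      PowerSeries.coeff_zero_mul_X]
  have hf' : ∀ m : ℕ, PowerSeries.coeff m ((d⁄dX ℤ) f) = R t (m + 1) * ((m : ℤ) + 1) := by
    intro m
    rw [PowerSeries.coeff_derivative, hf, PowerSeries.coeff_mk]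
    try push_cast
    try ring
  -- the key vanishing
  have inner : (2 : ℤ⟦X⟧) * ((d⁄dX ℤ) f) * q + f * ((d⁄dX ℤ) q) = 0 := by
    ext n
    rw [hq']
    have expand : (2 : ℤ⟦X⟧) * ((d⁄dX ℤ) f) * q + f *
        (- PowerSeries.C (2 * t) + PowerSeries.C (2 * (t ^ 2 - 4)) * PowerSeries.X)
      = (2 : ℤ⟦X⟧) * ((d⁄dX ℤ) f)
        - ((2 : ℤ⟦X⟧) * ((d⁄dX ℤ) f)) * (PowerSeries.C (2 * t) * PowerSeries.X)
        + ((2 : ℤ⟦X⟧) * ((d⁄dX ℤ) f)) * (PowerSeries.C (t ^ 2 - 4) * PowerSeries.X ^ 2)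
        - PowerSeries.C (2 * t) * f
        + f * (PowerSeries.C (2 * (t ^ 2 - 4)) * PowerSeries.X) := by
      rw [hq]; ring
    rw [expand]
    have h2f : ∀ m : ℕ, PowerSeries.coeff m ((2 : ℤ⟦X⟧) * ((d⁄dX ℤ) f))
        = 2 * (R t (m + 1) * ((m : ℤ) + 1)) := by
      intro m
      rw [show ((2 : ℤ⟦X⟧)) = PowerSeries.C 2 by norm_num, PowerSeries.coeff_C_mul, hf']
    have hfm : ∀ m : ℕ, PowerSeries.coeff m f = R t m := fun m => by
      rw [hf, PowerSeries.coeff_mk]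
    rcases n with _ | _ | m
    · simp only [LinearMap.map_add, LinearMap.map_sub, hc10, hc20, h2f,
        PowerSeries.coeff_C_mul, hfm, hc1, map_zero]
      rw [R0, R1]; push_cast; ring
    · simp only [LinearMap.map_add, LinearMap.map_sub, hc1, hc21, h2f,
        PowerSeries.coeff_C_mul, hfm, map_zero]
      have := R_rec t 0
      push_cast at this ⊢
      linarith
    · simp only [LinearMap.map_add, LinearMap.map_sub, hc1, hc2, h2f,
        PowerSeries.coeff_C_mul, hfm, map_zero]
      have := R_rec t (m + 1)
      push_cast at this ⊢
      linarith
  have hu : (d⁄dX ℤ) (f * f * q) = 0 := by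
    have : (d⁄dX ℤ) (f * f * q)
        = f * ((2 : ℤ⟦X⟧) * ((d⁄dX ℤ) f) * q + f * ((d⁄dX ℤ) q)) := by
      simp only [Derivation.leibniz, smul_eq_mul]; ring
    rw [this, inner, mul_zero]
  have hcoeff : ∀ n : ℕ, PowerSeries.coeff (n + 1) (f * f * q) = 0 := by
    intro n
    have h := congrArg (PowerSeries.coeff n) hu
    rw [PowerSeries.coeff_derivative, map_zero] at h
    have hne : ((n : ℤ) + 1) ≠ 0 := by positivity
    rcases mul_eq_zero.mp h with h | h
    · exact h
    · exact absurd (by exact_mod_cast h) hne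
  have hc0 : PowerSeries.coeff 0 (f * f * q) = 1 := by
    have : PowerSeries.constantCoeff (f * f * q) = 1 := by
      rw [hq, hf]
      simp [R0]
    simpa [PowerSeries.coeff_zero_eq_constantCoeff] using this
  have : f * f * q = 1 := by
    ext n
    rcases n with _ | n
    · simpa using hc0
    · rw [hcoeff n]
      simp
  calc f ^ 2 * q = f * f * q := by ring
  _ = 1 := this
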